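/- Fix integers 1 ≤ p < n. The map φ_pbw is an isomorphism of posets from (Ĩ_pbw, ≺_pbw) to the set 𝒥(Q̃) of finite order ideals of (Q̃,≺) ordered by inclusion. In particular, φ_pbw is a bijection from Ĩ_pbw to 𝒥(Q̃). -/

import Mathlib

open scoped Classical

noncomputable section

open MvPolynomial

/-- The index type of the variables `z_{i,j}^{(k)}`. -/
abbrev SVar (p n : ℕ) := Fin p × Fin n × ℕ

/-- The power series `D_I(t)`: the determinant of the `p×p` matrix whose `j`-th
column is the `α j`-th column of the matrix `Z(t)` of power series
`z_{i,j}(t) = Σ_k z_{i,j}^{(k)} t^k`. -/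
def Dser (p n : ℕ) (α : Fin p → Fin n) :
    PowerSeries (MvPolynomial (SVar p n) ℂ) :=
  (Matrix.of fun i j : Fin p =>
    PowerSeries.mk fun k => (X (i, α j, k) : MvPolynomial (SVar p n) ℂ)).det

/-- The coefficient `D_I^{(k)}` of `t^k` in `D_I(t)`. -/
def Dc (p n : ℕ) (α : Fin p → Fin n) (k : ℕ) : MvPolynomial (SVar p n) ℂ :=
  PowerSeries.coeff k (Dser p n α)

/-- The semi-infinite Plücker algebra `𝒫̃`: the subalgebra generated by all the
`D_I^{(k)}`. -/
def sPlue (p n : ℕ) : Subalgebra ℂ (MvPolynomial (SVar p n) ℂ) :=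
  Algebra.adjoin ℂ {f | ∃ (α : Fin p → Fin n) (k : ℕ), f = Dc p n α k}

/-- The position of `z_{i,j}^{(k)}` in the lexicographic ordering of the variables:
first by `k`, then by `i`, then by `j`. -/
def rankSS (p n : ℕ) (x : SVar p n) : ℕ :=
  x.2.2 * (p * n) + (x.1 : ℕ) * n + (x.2.1 : ℕ)
/-- `α` is a PBW tuple (0-indexed version): the entries are pairwise distinct, entries
`< p` stand at the position equal to their value, and entries `≥ p` appear in
decreasing order. -/
def IsPBW (p n : ℕ) (α : Fin p → Fin n) : Prop :=
  Function.Injective α ∧ (∀ j : Fin p, (α j : ℕ) < p → (α j : ℕ) = (j : ℕ)) ∧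
    ∀ j k : Fin p, p ≤ (α k : ℕ) → (α k : ℕ) < (α j : ℕ) → j < k
/-- Cyclic shift on `[1,n]` (0-indexed): `a ↦ a − k (mod n)`. -/
def shiftDown {n : ℕ} (k : ℕ) (a : Fin n) : Fin n :=
  ⟨((a : ℕ) + n - k % n) % n,
    Nat.mod_lt _ (Nat.lt_of_le_of_lt (Nat.zero_le _) a.isLt)⟩

/-- `I^{(k)} ∈ Ĩ_pbw`: the tuple `(α₁ − k mod n, …, α_p − k mod n)` is a PBW tuple. -/
def IsPBWk (p n : ℕ) (α : Fin p → Fin n) (k : ℕ) : Prop :=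
  IsPBW p n (fun i => shiftDown k (α i))

/-- The position of `z_{i,j}^{(k)}` in the `<_pbw` ordering of the variables: first
by `k`, then by `i`, and within fixed `k` and `i` cyclically starting with
`z_{i, kp+i mod n}^{(k)}`. -/
def rankPBWt (p n : ℕ) (x : SVar p n) : ℕ :=
  x.2.2 * (p * n) + (x.1 : ℕ) * n +
    ((x.2.1 : ℕ) + n - (x.2.2 * p + (x.1 : ℕ)) % n) % n
/-- The poset `Q̃`: elements `q_{i,j}` with `i ≥ 1`, `j ≥ p+1` and `j − i ∈ [0, n−1]`. -/
abbrev Qt (p n : ℕ) :=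
  {x : ℕ × ℕ // 1 ≤ x.1 ∧ p + 1 ≤ x.2 ∧ x.1 ≤ x.2 ∧ x.2 + 1 ≤ x.1 + n}

/-- The order relation of `Q̃` on raw pairs: `(i₁,j₁) ⪯ (i₂,j₂)` iff
(i) `i₁ ≤ i₂` and `j₁ ≤ j₂`, or (ii) `i₁ + p ≤ i₂`, or (iii) `j₁ + n − p ≤ j₂`. -/
def qleN (p n : ℕ) (a b : ℕ × ℕ) : Prop :=
  (a.1 ≤ b.1 ∧ a.2 ≤ b.2) ∨ a.1 + p ≤ b.1 ∨ a.2 + (n - p) ≤ b.2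

/-- The order `⪯` on `Q̃`. -/
def qleT (p n : ℕ) (a b : Qt p n) : Prop := qleN p n a.val b.val

/-- The order ideal `φ_ss(I^{(k)}) ⊆ Q̃`: all `q_{i,j}` with `i ≤ k` and, for each
`i ∈ [k+1, k+p]`, those `q_{i,j}` with `j ≤ i + α_{p+1−(i−k)} − 1`. -/
def phiSS (p n : ℕ) (α : Fin p → Fin n) (k : ℕ) : Set (Qt p n) :=
  {q | q.val.1 ≤ k ∨ ∃ t : Fin p, q.val.1 = k + 1 + (t : ℕ) ∧
    q.val.2 ≤ q.val.1 + (α ⟨p - 1 - (t : ℕ), by have := t.isLt; omega⟩ : ℕ)}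
/-- The order ideal `φ_pbw(I^{(k)}) ⊆ Q̃`: the minimal order ideal containing all the
elements `q_{k+i, k+(α_i−k mod n)}` with `i ∈ [1,p]` and `k + (α_i−k mod n) > p`. -/
def phiPBWt (p n : ℕ) (α : Fin p → Fin n) (k : ℕ) : Set (Qt p n) :=
  {q | ∃ i : Fin p, p ≤ k + (shiftDown k (α i) : ℕ) ∧
    qleN p n q.val (k + (i : ℕ) + 1, k + (shiftDown k (α i) : ℕ) + 1)}

/-- The order `⪯_pbw` on `Ĩ_pbw`: `I^{(k)} ⪯_pbw I'^{(k')}` iff `k ≤ k'` and for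
every `i ∈ [k'−k+1, p]` there is `i' ∈ [i−(k'−k), p]` with
`k + (α_i − k mod n) ≤ k' + (α'_{i'} − k' mod n)` (0-indexed form, where
`(b:ℕ)+k' ≥ (a:ℕ)+k` encodes `i' ≥ i − (k'−k)`). -/
def pbwLeT (p n : ℕ) (α : Fin p → Fin n) (k : ℕ) (α' : Fin p → Fin n) (k' : ℕ) :
    Prop :=
  k ≤ k' ∧ ∀ a : Fin p, k' ≤ k + (a : ℕ) →
    ∃ b : Fin p, (a : ℕ) + k ≤ (b : ℕ) + k' ∧
      k + (shiftDown k (α a) : ℕ) ≤ k' + (shiftDown k' (α' b) : ℕ)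

namespace S18

/-- Validity of a raw pair (the defining property of `Qt`). -/
def ValidPt (p n : ℕ) (x : ℕ × ℕ) : Prop :=
  1 ≤ x.1 ∧ p + 1 ≤ x.2 ∧ x.1 ≤ x.2 ∧ x.2 + 1 ≤ x.1 + n

variable {p n : ℕ}

lemma qleN_trans (hp : 1 ≤ p) (hpn : p < n) {a b c : ℕ × ℕ}
    (ha : ValidPt p n a) (hb : ValidPt p n b) (hc : ValidPt p n c)
    (h1 : qleN p n a b) (h2 : qleN p n b c) : qleN p n a c := by
  obtain ⟨a1, a2⟩ := a; obtain ⟨b1, b2⟩ := b; obtain ⟨c1, c2⟩ := c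
  simp only [qleN, ValidPt] at *
  omega

/-- Abstract PBW property for a ℕ-valued tuple. -/
def PbwN (p n : ℕ) (b : Fin p → ℕ) : Prop :=
  (∀ i, b i < n) ∧ (∀ i : Fin p, b i < p → b i = (i : ℕ)) ∧
    (∀ j l : Fin p, p ≤ b l → b l < b j → (j : ℕ) < (l : ℕ)) ∧
    Function.Injective b

lemma PbwN.self_le (hb : PbwN p n b) (i : Fin p) : (i : ℕ) ≤ b i := by
  rcases lt_or_ge (b i) p with h | h
  · exact (hb.2.1 i h).ge
  · exact le_of_lt (lt_of_lt_of_le i.isLt h)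

/-- The abstract φ_pbw set. -/
def phiN (p n : ℕ) (b : Fin p → ℕ) (k : ℕ) : Set (Qt p n) :=
  {q | ∃ i : Fin p, p ≤ k + b i ∧
    qleN p n q.val (k + (i : ℕ) + 1, k + b i + 1)}

lemma genValid (hb : PbwN p n b) {k : ℕ} {i : Fin p} (h : p ≤ k + b i) :
    ValidPt p n (k + (i : ℕ) + 1, k + b i + 1) := by
  have h1 := hb.1 i
  have h2 := hb.self_le i
  exact ⟨by omega, by omega, by omega, by omega⟩

end S18
namespace S18

variable {p n : ℕ}

lemma key_mod (x k : ℕ) : (x + k) % n = (x + k % n) % n := by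
  conv_lhs => rw [← Nat.div_add_mod k n]
  rw [show x + (n * (k / n) + k % n) = x + k % n + n * (k / n) by ring,
    Nat.add_mul_mod_self_left]

/-- unshift ∘ shift = id -/
lemma mod_shift (hn : 0 < n) {u : ℕ} (hu : u < n) (k : ℕ) :
    ((u + n - k % n) % n + k) % n = u := by
  have hc : k % n < n := Nat.mod_lt _ hn
  rw [key_mod]
  rcases Nat.lt_or_ge (u + n - k % n) n with h | h
  · rw [Nat.mod_eq_of_lt h, show u + n - k % n + k % n = u + n by omega,
      Nat.add_mod_right, Nat.mod_eq_of_lt hu]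
  · have h2 : (u + n - k % n) % n = u - k % n := by
      rw [Nat.mod_eq_sub_mod h, show u + n - k % n - n = u - k % n by omega,
        Nat.mod_eq_of_lt (by omega)]
    rw [h2, show u - k % n + k % n = u by omega, Nat.mod_eq_of_lt hu]

/-- shift ∘ unshift = id -/
lemma shift_mod (hn : 0 < n) {v : ℕ} (hv : v < n) (k : ℕ) :
    ((v + k) % n + n - k % n) % n = v := by
  have hc : k % n < n := Nat.mod_lt _ hn
  rw [key_mod]
  rcases Nat.lt_or_ge (v + k % n) n with h | h
  · rw [Nat.mod_eq_of_lt h, show v + k % n + n - k % n = v + n by omega,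
      Nat.add_mod_right, Nat.mod_eq_of_lt hv]
  · have h2 : (v + k % n) % n = v + k % n - n := by
      rw [Nat.mod_eq_sub_mod h, show v + k % n - n = v + k % n - n by rfl,
        Nat.mod_eq_of_lt (by omega)]
    rw [h2, show v + k % n - n + n - k % n = v by omega, Nat.mod_eq_of_lt hv]

end S18
namespace S18

variable {p n : ℕ}

/-- Build `α` from an abstract tuple. -/
def mkA (b : Fin p → ℕ) (hn : 0 < n) (k : ℕ) : Fin p → Fin n :=
  fun i => ⟨(b i + k) % n, Nat.mod_lt _ hn⟩

lemma shiftDown_mkA {b : Fin p → ℕ} (hn : 0 < n) (hb : ∀ i, b i < n) (k : ℕ)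
    (i : Fin p) : (shiftDown k (mkA b hn k i) : ℕ) = b i :=
  shift_mod hn (hb i) k

lemma unshift (hn : 0 < n) (k : ℕ) (a : Fin n) :
    ((shiftDown k a : ℕ) + k) % n = (a : ℕ) :=
  mod_shift hn a.isLt k

lemma isPBWk_pbwN {α : Fin p → Fin n} {k : ℕ} (h : IsPBWk p n α k) :
    PbwN p n (fun i => (shiftDown k (α i) : ℕ)) := by
  obtain ⟨hinj, hsm, hbig⟩ := h
  refine ⟨fun i => (shiftDown k (α i)).isLt, hsm, hbig, fun i j hij => hinj ?_⟩
  exact Fin.ext hij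

lemma pbwN_isPBWk {b : Fin p → ℕ} (hb : PbwN p n b) (hn : 0 < n) (k : ℕ) :
    IsPBWk p n (mkA b hn k) k := by
  have hv : ∀ i, (shiftDown k (mkA b hn k i) : ℕ) = b i := shiftDown_mkA hn hb.1 k
  refine ⟨fun i j hij => hb.2.2.2 ?_, fun j hj => ?_, fun j l h1 h2 => ?_⟩
  · have := congrArg Fin.val hij
    rwa [hv, hv] at this
  · rw [hv] at hj ⊢; exact hb.2.1 j hj
  · rw [hv] at h1 h2; rw [hv] at h2; exact hb.2.2.1 j l h1 h2

lemma phiPBWt_eq_phiN (α : Fin p → Fin n) (k : ℕ) :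
    phiPBWt p n α k = phiN p n (fun i => (shiftDown k (α i) : ℕ)) k := rfl

lemma mkA_val (hn : 0 < n) {b b' : Fin p → ℕ} (k : ℕ)
    (hbb : ∀ i, b i = b' i) : mkA b hn k = mkA b' hn k := by
  funext i; exact Fin.ext (by simp [mkA, hbb i])

end S18
namespace S18

variable {p n : ℕ} {b b' : Fin p → ℕ}

lemma phiN_ideal (hp : 1 ≤ p) (hpn : p < n) (hb : PbwN p n b) {k : ℕ} :
    ∀ a ∈ phiN p n b k, ∀ q, qleT p n q a → q ∈ phiN p n b k := by
  rintro a ⟨i, hg, hle⟩ q hq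
  exact ⟨i, hg, qleN_trans hp hpn q.2 a.2 (genValid hb hg) hq hle⟩

lemma phiN_finite (hb : PbwN p n b) (k : ℕ) : (phiN p n b k).Finite := by
  have hsub : phiN p n b k ⊆
      Subtype.val ⁻¹' (Set.Icc ((1 : ℕ), (1 : ℕ)) (k + p + n, k + p + n)) := by
    rintro q ⟨i, hg, hle⟩
    have hv := q.2
    have h1 := hb.1 i
    have h2 := i.isLt
    simp only [qleN] at hle
    simp only [Set.mem_preimage, Set.mem_Icc, Prod.le_def]
    rcases hle with ⟨h3, h4⟩ | h3 | h3 <;>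
      exact ⟨⟨by omega, by omega⟩, by omega, by omega⟩
  exact Set.Finite.subset
    ((Set.finite_Icc _ _).preimage Subtype.val_injective.injOn)
    hsub

lemma gen_pm1 (hp : 1 ≤ p) (hb : PbwN p n b) {k : ℕ} (hk : 1 ≤ k) :
    p ≤ k + b ⟨p - 1, by omega⟩ := by
  have := hb.self_le ⟨p - 1, by omega⟩
  simp only at this
  omega

lemma le_imp_subset (hp : 1 ≤ p) (hpn : p < n) (hb : PbwN p n b)
    (hb' : PbwN p n b') {k k' : ℕ} (hkk : k ≤ k')
    (H : ∀ a : Fin p, k' ≤ k + (a : ℕ) →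
      ∃ j : Fin p, (a : ℕ) + k ≤ (j : ℕ) + k' ∧ k + b a ≤ k' + b' j) :
    phiN p n b k ⊆ phiN p n b' k' := by
  rintro q ⟨i, hg, hle⟩
  rcases le_or_gt k' (k + (i : ℕ)) with hc | hc
  · obtain ⟨j, hj1, hj2⟩ := H i hc
    have hg' : p ≤ k' + b' j := by omega
    refine ⟨j, hg', qleN_trans hp hpn q.2 (genValid hb hg) (genValid hb' hg') hle ?_⟩
    exact Or.inl ⟨by omega, by omega⟩
  · have hk' : 1 ≤ k' := by omega
    have hg' := gen_pm1 hp hb' hk'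
    refine ⟨⟨p - 1, by omega⟩, hg',
      qleN_trans hp hpn q.2 (genValid hb hg) (genValid hb' hg') hle ?_⟩
    refine Or.inr (Or.inl ?_)
    simp only
    omega

lemma subset_imp_le (hp : 1 ≤ p) (hpn : p < n) (hb : PbwN p n b)
    (hb' : PbwN p n b') {k k' : ℕ}
    (hsub : phiN p n b k ⊆ phiN p n b' k') :
    k ≤ k' ∧ ∀ a : Fin p, k' ≤ k + (a : ℕ) →
      ∃ j : Fin p, (a : ℕ) + k ≤ (j : ℕ) + k' ∧ k + b a ≤ k' + b' j := by
  have hkk : k ≤ k' := by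
    by_contra hcon
    push_neg at hcon
    have hk : 1 ≤ k := by omega
    set L : Fin p := ⟨p - 1, by omega⟩ with hL
    have hg := gen_pm1 hp hb hk
    have hmem : (⟨_, genValid hb hg⟩ : Qt p n) ∈ phiN p n b k :=
      ⟨L, hg, Or.inl ⟨le_refl _, le_refl _⟩⟩
    obtain ⟨j, hg', hle⟩ := hsub hmem
    simp only [qleN, hL] at hle
    have h1 := hb.1 L
    have h2 := hb'.1 j
    have h3 := hb.self_le L
    have h4 := j.isLt
    simp only [hL] at h1 h3
    omega
  refine ⟨hkk, fun a ha => ?_⟩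
  rcases le_or_gt p (k + b a) with hg | hg
  · have hmem : (⟨_, genValid hb hg⟩ : Qt p n) ∈ phiN p n b k :=
      ⟨a, hg, Or.inl ⟨le_refl _, le_refl _⟩⟩
    obtain ⟨j, hg', hle⟩ := hsub hmem
    have h2 := hb'.1 j
    have h4 := j.isLt
    rcases hle with ⟨hl1, hl2⟩ | hl | hl
    · exact ⟨j, by simp only at hl1 hl2 ⊢; omega⟩
    · simp only at hl; omega
    · simp only at hl
      refine ⟨⟨p - 1, by omega⟩, ?_, ?_⟩
      · simp only; have := a.isLt; omega
      · have h5 := hb'.self_le ⟨p - 1, by omega⟩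
        simp only at h5
        omega
  · have hba : b a = (a : ℕ) := hb.2.1 a (by omega)
    refine ⟨⟨(a : ℕ) + k - k', by have := a.isLt; omega⟩, by simp only; omega, ?_⟩
    have h5 := hb'.self_le ⟨(a : ℕ) + k - k', by have := a.isLt; omega⟩
    simp only at h5
    omega

end S18
namespace S18

variable {p n : ℕ} {b b' : Fin p → ℕ}

/-- Suffix maximum of a tuple. -/
def msuf (p : ℕ) (b : Fin p → ℕ) (d : ℕ) : ℕ :=
  (Finset.univ.filter (fun s : Fin p => d ≤ (s : ℕ))).sup b

lemma le_msuf {d : ℕ} {s : Fin p} (h : d ≤ (s : ℕ)) : b s ≤ msuf p b d :=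
  Finset.le_sup (by simp [h])

lemma msuf_attained {d : ℕ} (h : msuf p b d ≠ 0) :
    ∃ s : Fin p, d ≤ (s : ℕ) ∧ b s = msuf p b d := by
  rcases Finset.eq_empty_or_nonempty
      (Finset.univ.filter (fun s : Fin p => d ≤ (s : ℕ))) with he | hne
  · exfalso; apply h; unfold msuf; rw [he]; rfl
  · obtain ⟨s, hs, hsup⟩ := Finset.exists_mem_eq_sup _ hne b
    simp only [Finset.mem_filter] at hs
    exact ⟨s, hs.2, hsup.symm⟩

lemma msuf_eq_of_cond (hb : PbwN p n b) (hb' : PbwN p n b')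
    (H : ∀ a : Fin p, ∃ j : Fin p, (a : ℕ) ≤ (j : ℕ) ∧ b a ≤ b' j)
    (d : ℕ) : msuf p b d ≤ msuf p b' d := by
  apply Finset.sup_le
  intro s hs
  simp only [Finset.mem_filter] at hs
  obtain ⟨j, hj1, hj2⟩ := H s
  exact le_trans hj2 (le_msuf (le_trans hs.2 hj1))

/-- Reconstruction of a PBW tuple from its suffix maxima. -/
lemma recon (hp : 1 ≤ p) (hb : PbwN p n b) (a : Fin p) :
    b a = if p ≤ msuf p b (a : ℕ) ∧ msuf p b ((a : ℕ) + 1) < msuf p b (a : ℕ)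
      then msuf p b (a : ℕ) else (a : ℕ) := by
  rcases le_or_gt p (b a) with hba | hba
  · have hup : ∀ s : Fin p, (a : ℕ) ≤ (s : ℕ) → b s ≤ b a := by
      intro s hs
      rcases eq_or_ne s a with rfl | hne
      · exact le_refl _
      · by_contra hcon
        push_neg at hcon
        have := hb.2.2.1 s a hba hcon
        omega
    have hm : msuf p b (a : ℕ) = b a :=
      le_antisymm (Finset.sup_le (fun s hs => by
        simp only [Finset.mem_filter] at hs; exact hup s hs.2))
        (le_msuf (le_refl _))
    have hm2 : msuf p b ((a : ℕ) + 1) < b a := by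
      rcases Nat.eq_zero_or_pos (msuf p b ((a : ℕ) + 1)) with h0 | h0
      · omega
      · obtain ⟨s, hs1, hs2⟩ :=
          msuf_attained (b := b) (d := (a : ℕ) + 1) (by omega)
        have hne : s ≠ a := by intro h; rw [h] at hs1; omega
        have := hup s (by omega)
        have : b s ≠ b a := fun h => hne (hb.2.2.2 h)
        omega
    rw [if_pos ⟨by omega, by omega⟩, hm]
  · have hba' : b a = (a : ℕ) := hb.2.1 a hba
    rw [if_neg, hba']
    rintro ⟨h1, h2⟩
    obtain ⟨s, hs1, hs2⟩ := msuf_attained (b := b) (d := (a : ℕ)) (by omega)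
    have hne : s ≠ a := by intro h; rw [h] at hs2; omega
    have hs1' : (a : ℕ) + 1 ≤ (s : ℕ) := by
      rcases Nat.lt_or_ge (a : ℕ) (s : ℕ) with h | h
      · omega
      · exfalso; apply hne; exact Fin.ext (by omega)
    have := le_msuf (b := b) hs1'
    omega

lemma pbw_unique (hp : 1 ≤ p) (hb : PbwN p n b) (hb' : PbwN p n b')
    (H1 : ∀ a : Fin p, ∃ j : Fin p, (a : ℕ) ≤ (j : ℕ) ∧ b a ≤ b' j)
    (H2 : ∀ a : Fin p, ∃ j : Fin p, (a : ℕ) ≤ (j : ℕ) ∧ b' a ≤ b j) :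
    ∀ a, b a = b' a := by
  have hm : ∀ d, msuf p b d = msuf p b' d := fun d =>
    le_antisymm (msuf_eq_of_cond hb hb' H1 d) (msuf_eq_of_cond hb' hb H2 d)
  intro a
  rw [recon hp hb a, recon hp hb' a, hm, hm]

end S18
namespace S18

open scoped Classical in
lemma surj {p n : ℕ} (hp : 1 ≤ p) (hpn : p < n) (S : Set (Qt p n))
    (hfin : S.Finite) (hid : ∀ a ∈ S, ∀ q, qleT p n q a → q ∈ S) :
    ∃ (b : Fin p → ℕ) (k : ℕ), PbwN p n b ∧ phiN p n b k = S := by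
  rcases S.eq_empty_or_nonempty with rfl | hne
  · refine ⟨fun i => (i : ℕ), 0, ⟨fun i => lt_trans i.isLt hpn,
      fun i _ => rfl, fun j l h1 _ => by simp only at h1; have := l.isLt; omega,
      fun i j h => Fin.ext h⟩, ?_⟩
    rw [Set.eq_empty_iff_forall_notMem]
    rintro q ⟨i, hgen, -⟩
    simp only at hgen
    have := i.isLt
    omega
  -- nonempty case
  have hTne : hfin.toFinset.Nonempty := by
    rwa [Set.Finite.toFinset_nonempty]
  set T := hfin.toFinset with hT
  set r := T.sup (fun q => q.val.1) with hrdef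
  have hr_le : ∀ q ∈ S, q.val.1 ≤ r := fun q hq =>
    Finset.le_sup (f := fun q : Qt p n => q.val.1) (hfin.mem_toFinset.mpr hq)
  have hr1 : 1 ≤ r := by
    obtain ⟨q, hq⟩ := hne
    exact le_trans q.2.1 (hr_le q hq)
  set k := r - p with hkdef
  set m : ℕ → ℕ := fun x => T.sup (fun q => if q.val.1 = x then q.val.2 else 0)
    with hmdef
  have hm_le : ∀ q ∈ S, q.val.2 ≤ m q.val.1 := by
    intro q hq
    have := Finset.le_sup (f := fun q' : Qt p n =>
      if q'.val.1 = q.val.1 then q'.val.2 else 0) (hfin.mem_toFinset.mpr hq)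
    simpa using this
  have hm_att : ∀ x, m x ≠ 0 → ∃ q ∈ S, q.val.1 = x ∧ q.val.2 = m x := by
    intro x hx
    obtain ⟨q, hqT, hsup⟩ := Finset.exists_mem_eq_sup T hTne
      (fun q : Qt p n => if q.val.1 = x then q.val.2 else 0)
    by_cases h : q.val.1 = x
    · exact ⟨q, hfin.mem_toFinset.mp hqT, h, by rw [show m x = _ from hsup, if_pos h]⟩
    · exact absurd (by rw [show m x = _ from hsup, if_neg h]) hx
  have hm_pos : ∀ x, m x ≠ 0 →
      p + 1 ≤ m x ∧ x ≤ m x ∧ m x + 1 ≤ x + n ∧ 1 ≤ x ∧ x ≤ r := by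
    intro x hx
    obtain ⟨q, hq, h1, h2⟩ := hm_att x hx
    have hv := q.2
    have := hr_le q hq
    omega
  have hmr : p + 1 ≤ m r := by
    obtain ⟨q, hqT, hsup⟩ := Finset.exists_mem_eq_sup T hTne (fun q : Qt p n => q.val.1)
    have hq : q ∈ S := hfin.mem_toFinset.mp hqT
    have h2 := hm_le q hq
    have h3 : q.val.1 = r := by rw [hrdef]; exact hsup.symm
    rw [h3] at h2
    have hv := q.2
    omega
  have hm_zero : ∀ x, r < x → m x = 0 := by
    intro x hx
    by_contra h
    have := (hm_pos x h).2.2.2.2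
    omega
  have hfull : ∀ x, 2 ≤ x → m x = x + n - 1 → x + p - 1 ≤ r := by
    intro x h2 hfx
    obtain ⟨q0, hq0, h01, h02⟩ := hm_att x (by omega)
    have hv : ValidPt p n (x + p - 1, x + p - 1) := ⟨by omega, by omega, le_refl _, by omega⟩
    have hqle : qleN p n (x + p - 1, x + p - 1) q0.val := by
      simp only [qleN]
      omega
    have hw : (⟨(x + p - 1, x + p - 1), hv⟩ : Qt p n) ∈ S := hid q0 hq0 _ hqle
    exact hr_le _ hw
  have hnotfull : ∀ x, k + 2 ≤ x → m x + 2 ≤ x + n := by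
    intro x hx
    by_cases h0 : m x = 0
    · omega
    · have hb1 := (hm_pos x h0).2.2.1
      by_cases hisfull : m x = x + n - 1
      · have := hfull x (by omega) hisfull
        have := (hm_pos x h0).2.2.2.2
        omega
      · omega
  have hdec : ∀ x, k + 1 ≤ x → m (x + 1) ≤ m x := by
    intro x hx
    by_cases h0 : m (x + 1) = 0
    · omega
    · obtain ⟨q0, hq0, h01, h02⟩ := hm_att (x + 1) h0
      have hpos := hm_pos (x + 1) h0
      have hnf := hnotfull (x + 1) (by omega)
      have hv : ValidPt p n (x, m (x + 1)) := ⟨by omega, by omega, by omega, by omega⟩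
      have hqle : qleN p n (x, m (x + 1)) q0.val := by
        simp only [qleN]; omega
      have hw : (⟨(x, m (x + 1)), hv⟩ : Qt p n) ∈ S := hid q0 hq0 _ hqle
      have h3 : m (x + 1) ≤ m x := hm_le _ hw
      exact h3
  have hdec' : ∀ x y, k + 1 ≤ x → x ≤ y → m y ≤ m x := by
    have haux : ∀ d x, k + 1 ≤ x → m (x + d) ≤ m x := by
      intro d
      induction d with
      | zero => intro x _; exact le_refl _
      | succ d ih =>
        intro x hx
        have h1 : m (x + d + 1) ≤ m (x + d) := hdec (x + d) (by omega)
        have h2 := ih x hx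
        have : x + (d + 1) = x + d + 1 := by omega
        rw [this]
        omega
    intro x y hx hxy
    have := haux (y - x) x hx
    rwa [show x + (y - x) = y by omega] at this
  have hpre : ∀ x, 1 ≤ x → m (x + 1) ≠ 0 → m x ≠ 0 := by
    intro x h1 h0
    obtain ⟨q0, hq0, h01, h02⟩ := hm_att (x + 1) h0
    have hpos := hm_pos (x + 1) h0
    have hv : ValidPt p n (x, min (m (x + 1)) (x + n - 1)) :=
      ⟨by omega, by omega, by omega, by omega⟩
    have hqle : qleN p n (x, min (m (x + 1)) (x + n - 1)) q0.val := by
      simp only [qleN]; omega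
    have hw : (⟨_, hv⟩ : Qt p n) ∈ S := hid q0 hq0 _ hqle
    have h3 : min (m (x + 1)) (x + n - 1) ≤ m x := hm_le _ hw
    omega
  have hne0 : ∀ x, 1 ≤ x → x ≤ r → m x ≠ 0 := by
    have haux : ∀ d x, x + d = r → 1 ≤ x → m x ≠ 0 := by
      intro d
      induction d with
      | zero => intro x hx _; rw [show x = r by omega]; omega
      | succ d ih =>
        intro x hx h1
        exact hpre x h1 (ih (x + 1) (by omega) (by omega))
    intro x h1 h2
    exact haux (r - x) x (by omega) h1
  have hm_kn : ∀ t : ℕ, m (k + 1 + t) ≤ k + n := by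
    intro t
    have h1 := hdec' (k + 1) (k + 1 + t) (le_refl _) (by omega)
    by_cases h0 : m (k + 1) = 0
    · omega
    · have := (hm_pos (k + 1) h0).2.2.1
      omega
  set fired : ℕ → Prop :=
    fun t => k + p + 1 ≤ m (k + 1 + t) ∧ m (k + 2 + t) < m (k + 1 + t)
    with hfdef
  set bfun : Fin p → ℕ :=
    fun t => if fired (t : ℕ) then m (k + 1 + (t : ℕ)) - (k + 1) else (t : ℕ)
    with hbdef
  have hb_fired : ∀ t : Fin p, fired (t : ℕ) →
      p ≤ bfun t ∧ k + bfun t + 1 = m (k + 1 + (t : ℕ)) := by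
    intro t ht
    rw [hbdef]
    simp only [if_pos ht]
    have := ht.1
    omega
  have hb_not : ∀ t : Fin p, ¬ fired (t : ℕ) → bfun t = (t : ℕ) := by
    intro t ht
    rw [hbdef]
    simp only [if_neg ht]
  have hstrict : ∀ t t' : Fin p, fired (t : ℕ) → fired (t' : ℕ) →
      (t : ℕ) < (t' : ℕ) → bfun t' < bfun t := by
    intro t t' ht ht' hlt
    have h1 : m (k + 1 + (t' : ℕ)) ≤ m (k + 2 + (t : ℕ)) :=
      hdec' (k + 2 + (t : ℕ)) (k + 1 + (t' : ℕ)) (by omega) (by omega)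
    have h2 := ht.2
    have h3 := (hb_fired t ht).2
    have h4 := (hb_fired t' ht').2
    omega
  have hPbw : PbwN p n bfun := by
    refine ⟨?_, ?_, ?_, ?_⟩
    · intro i
      by_cases hf : fired (i : ℕ)
      · have h1 := (hb_fired i hf).2
        have h2 := hm_kn (i : ℕ)
        omega
      · rw [hb_not i hf]
        exact lt_trans i.isLt hpn
    · intro i hi
      by_cases hf : fired (i : ℕ)
      · have := (hb_fired i hf).1; omega
      · exact hb_not i hf
    · intro j l h1 h2
      have hfl : fired (l : ℕ) := by
        by_contra hc
        rw [hb_not l hc] at h1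
        have := l.isLt
        omega
      have hfj : fired (j : ℕ) := by
        by_contra hc
        rw [hb_not j hc] at h2
        have := j.isLt
        omega
      by_contra hc
      push_neg at hc
      rcases eq_or_lt_of_le hc with heq | hlt
      · rw [show l = j from Fin.ext heq] at h2
        omega
      · have := hstrict l j hfl hfj hlt
        omega
    · intro i j hij
      by_cases hfi : fired (i : ℕ) <;> by_cases hfj : fired (j : ℕ)
      · rcases lt_trichotomy (i : ℕ) (j : ℕ) with h | h | h
        · have := hstrict i j hfi hfj h; omega
        · exact Fin.ext h
        · have := hstrict j i hfj hfi h; omega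
      · have h1 := (hb_fired i hfi).1
        rw [hb_not j hfj] at hij
        have := j.isLt
        omega
      · have h1 := (hb_fired j hfj).1
        rw [hb_not i hfi] at hij
        have := i.isLt
        omega
      · rw [hb_not i hfi, hb_not j hfj] at hij
        exact Fin.ext hij
  refine ⟨bfun, k, hPbw, ?_⟩
  ext q
  constructor
  · rintro ⟨i, hgen, hle⟩
    by_cases hf : fired (i : ℕ)
    · have hbf := hb_fired i hf
      have hmne : m (k + 1 + (i : ℕ)) ≠ 0 := by omega
      obtain ⟨q0, hq0, h01, h02⟩ := hm_att _ hmne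
      have heq : q0.val = (k + (i : ℕ) + 1, k + bfun i + 1) := by
        have : q0.val = (q0.val.1, q0.val.2) := rfl
        rw [this]
        have e1 : q0.val.1 = k + (i : ℕ) + 1 := by omega
        have e2 : q0.val.2 = k + bfun i + 1 := by omega
        rw [e1, e2]
      refine hid q0 hq0 q ?_
      show qleN p n q.val q0.val
      rw [heq]
      exact hle
    · have hbn := hb_not i hf
      rw [hbn] at hgen hle
      have hk1 : 1 ≤ k := by have := i.isLt; omega
      have hrkp : r = k + p := by omega
      have hmne : m (k + 1 + (i : ℕ)) ≠ 0 :=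
        hne0 _ (by omega) (by have := i.isLt; omega)
      obtain ⟨q0, hq0, h01, h02⟩ := hm_att _ hmne
      have hpos := hm_pos _ hmne
      have hv : ValidPt p n (k + (i : ℕ) + 1, k + (i : ℕ) + 1) :=
        ⟨by omega, by omega, le_refl _, by omega⟩
      have hqle : qleN p n (k + (i : ℕ) + 1, k + (i : ℕ) + 1) q0.val := by
        simp only [qleN]; omega
      have hw : (⟨_, hv⟩ : Qt p n) ∈ S := hid q0 hq0 _ hqle
      exact hid _ hw q hle
  · intro hq
    have hx_le := hr_le q hq
    have hv := q.2
    have hy_le := hm_le q hq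
    rcases le_or_gt q.val.1 k with hxk | hxk
    · have hk1 : 1 ≤ k := le_trans q.2.1 hxk
      set L : Fin p := ⟨p - 1, by omega⟩ with hL
      have hLv : (L : ℕ) = p - 1 := rfl
      refine ⟨L, ?_, Or.inr (Or.inl ?_)⟩
      · have h5 := hPbw.self_le L
        rw [hLv] at h5
        omega
      · show q.val.1 + p ≤ k + (L : ℕ) + 1
        rw [hLv]
        omega
    · -- q.val.1 ≥ k + 1
      have hmx : m q.val.1 ≠ 0 := by omega
      have hxr : q.val.1 ≤ k + p := by omega
      rcases le_or_gt (k + p + 1) (m q.val.1) with hbig | hsmall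
      · -- plateau end
        set E := (Finset.range p).filter
          (fun s => q.val.1 - (k + 1) ≤ s ∧ m (k + 1 + s) = m q.val.1) with hE
        have htE : q.val.1 - (k + 1) ∈ E := by
          rw [hE]
          simp only [Finset.mem_filter, Finset.mem_range]
          refine ⟨by omega, le_refl _, ?_⟩
          rw [show k + 1 + (q.val.1 - (k + 1)) = q.val.1 by omega]
        have hEne : E.Nonempty := ⟨_, htE⟩
        set s := E.max' hEne with hs
        have hsmem := Finset.mem_filter.mp (E.max'_mem hEne)
        rw [← hs] at hsmem
        have hs1 : s < p := Finset.mem_range.mp hsmem.1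
        have hs2 : q.val.1 - (k + 1) ≤ s := hsmem.2.1
        have hs3 : m (k + 1 + s) = m q.val.1 := hsmem.2.2
        have hfs : fired s := by
          constructor
          · omega
          · rcases le_or_gt (k + 2 + s) r with hin | hout
            · have h1 : m (k + 2 + s) ≤ m (k + 1 + s) := by
                have := hdec (k + 1 + s) (by omega)
                rwa [show k + 1 + s + 1 = k + 2 + s by omega] at this
              rcases eq_or_lt_of_le h1 with heq | hlt
              · exfalso
                have hs1' : s + 1 ∈ E := by
                  rw [hE]
                  simp only [Finset.mem_filter, Finset.mem_range]
                  refine ⟨by omega, by omega, ?_⟩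
                  rw [show k + 1 + (s + 1) = k + 2 + s by omega]
                  omega
                have := E.le_max' (s + 1) hs1'
                rw [← hs] at this
                omega
              · omega
            · have := hm_zero (k + 2 + s) hout
              omega
        set iF : Fin p := ⟨s, hs1⟩ with hiF
        have hiFv : (iF : ℕ) = s := rfl
        have hbf := hb_fired iF (by rwa [hiFv])
        rw [hiFv] at hbf
        refine ⟨iF, by omega, Or.inl ?_⟩
        show q.val.1 ≤ k + (iF : ℕ) + 1 ∧ q.val.2 ≤ k + bfun iF + 1
        rw [hiFv]
        omega
      · -- m x ≤ k + p
        have hk1 : 1 ≤ k := by omega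
        set L : Fin p := ⟨p - 1, by omega⟩ with hL
        have hLv : (L : ℕ) = p - 1 := rfl
        have hnf : ¬ fired ((L : ℕ)) := by
          rw [hLv]
          intro hcon
          have h1 : m (k + p) ≤ m q.val.1 :=
            hdec' q.val.1 (k + p) (by omega) (by omega)
          have hc1 : k + p + 1 ≤ m (k + 1 + (p - 1)) := hcon.1
          rw [show k + 1 + (p - 1) = k + p by omega] at hc1
          omega
        have hbn := hb_not L hnf
        refine ⟨L, ?_, Or.inl ?_⟩
        · rw [hbn, hLv]; omega
        · show q.val.1 ≤ k + (L : ℕ) + 1 ∧ q.val.2 ≤ k + bfun L + 1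
          rw [hbn, hLv]
          omega

end S18

/-- The map `φ_pbw` is an isomorphism of posets from
`(Ĩ_pbw, ⪯_pbw)` onto the set `𝒥(Q̃)` of finite order ideals of `(Q̃,≺)` ordered by
inclusion; in particular it is a bijection from `Ĩ_pbw` onto `𝒥(Q̃)`. -/
theorem statement18 (p n : ℕ) (hp : 1 ≤ p) (hpn : p < n) :
    (∀ (α : Fin p → Fin n) (k : ℕ), IsPBWk p n α k →
        (phiPBWt p n α k).Finite ∧
          (∀ a ∈ phiPBWt p n α k, ∀ b, qleT p n b a → b ∈ phiPBWt p n α k)) ∧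
      (∀ (α α' : Fin p → Fin n) (k k' : ℕ), IsPBWk p n α k → IsPBWk p n α' k' →
        phiPBWt p n α k = phiPBWt p n α' k' → α = α' ∧ k = k') ∧
      (∀ S : Set (Qt p n), S.Finite → (∀ a ∈ S, ∀ b, qleT p n b a → b ∈ S) →
        ∃ (α : Fin p → Fin n) (k : ℕ), IsPBWk p n α k ∧ phiPBWt p n α k = S) ∧
      (∀ (α α' : Fin p → Fin n) (k k' : ℕ), IsPBWk p n α k → IsPBWk p n α' k' →
        (pbwLeT p n α k α' k' ↔ phiPBWt p n α k ⊆ phiPBWt p n α' k')) := by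
  have hn : 0 < n := by omega
  refine ⟨?_, ?_, ?_, ?_⟩
  · intro α k hk
    have hb := S18.isPBWk_pbwN hk
    rw [S18.phiPBWt_eq_phiN]
    exact ⟨S18.phiN_finite hb k, S18.phiN_ideal hp hpn hb⟩
  · intro α α' k k' hk hk' heq
    have hb := S18.isPBWk_pbwN hk
    have hb' := S18.isPBWk_pbwN hk'
    rw [S18.phiPBWt_eq_phiN, S18.phiPBWt_eq_phiN] at heq
    have h1 := S18.subset_imp_le hp hpn hb hb' heq.subset
    have h2 := S18.subset_imp_le hp hpn hb' hb heq.symm.subset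
    have hkk : k = k' := le_antisymm h1.1 h2.1
    subst hkk
    have H1 : ∀ a : Fin p, ∃ j : Fin p, (a : ℕ) ≤ (j : ℕ) ∧
        (fun i => (shiftDown k (α i) : ℕ)) a ≤ (fun i => (shiftDown k (α' i) : ℕ)) j := by
      intro a
      obtain ⟨j, hj1, hj2⟩ := h1.2 a (by omega)
      exact ⟨j, by omega, by simp only; omega⟩
    have H2 : ∀ a : Fin p, ∃ j : Fin p, (a : ℕ) ≤ (j : ℕ) ∧
        (fun i => (shiftDown k (α' i) : ℕ)) a ≤ (fun i => (shiftDown k (α i) : ℕ)) j := by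
      intro a
      obtain ⟨j, hj1, hj2⟩ := h2.2 a (by omega)
      exact ⟨j, by omega, by simp only; omega⟩
    have heqb := S18.pbw_unique hp hb hb' H1 H2
    refine ⟨funext fun i => Fin.ext ?_, rfl⟩
    have e1 := S18.unshift hn k (α i)
    have e2 := S18.unshift hn k (α' i)
    have hv : (shiftDown k (α i) : ℕ) = (shiftDown k (α' i) : ℕ) := heqb i
    rw [← e1, ← e2, hv]
  · intro S hfin hid
    obtain ⟨b, k, hb, hphi⟩ := S18.surj hp hpn S hfin hid
    refine ⟨S18.mkA b hn k, k, S18.pbwN_isPBWk hb hn k, ?_⟩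
    rw [S18.phiPBWt_eq_phiN]
    have hfb : (fun i => ((shiftDown k (S18.mkA b hn k i)) : ℕ)) = b :=
      funext (S18.shiftDown_mkA hn hb.1 k)
    rw [hfb, hphi]
  · intro α α' k k' hk hk'
    have hb := S18.isPBWk_pbwN hk
    have hb' := S18.isPBWk_pbwN hk'
    rw [S18.phiPBWt_eq_phiN, S18.phiPBWt_eq_phiN]
    constructor
    · rintro ⟨h1, h2⟩
      exact S18.le_imp_subset hp hpn hb hb' h1 h2
    · intro hsub
      obtain ⟨h1, h2⟩ := S18.subset_imp_le hp hpn hb hb' hsub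
      exact ⟨h1, h2⟩
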